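/- arXiv:2104.13481 — 2 statements merged into one kernel-verified Lean document; each statement's English description precedes it below -/
import Mathlib

section
/- Let c be a normalized order-preserving 3-coboundary, c = δ²d with d ∈ C²_≤(T¹, A¹). Define u(t) = d(t, t⁻¹)⁻¹ and d̃ = d · δ¹u. Then d̃ is a strongly normalized order-preserving 2-cochain with δ²d̃ = c; in particular d̃(e, t) = θ(e t t⁻¹) and d̃(t, e) = θ(t e t⁻¹) for all t ∈ T, e ∈ E(T). -/
/-- An inverse semigroup: every element `s` has a (unique) inverse `s⁻¹`
with `s * s⁻¹ * s = s` and `s⁻¹ * s * s⁻¹ = s⁻¹`. -/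
class InverseSemigroup (S : Type*) extends Semigroup S, Inv S where
  mul_inv_mul : ∀ s : S, s * s⁻¹ * s = s
  inv_mul_inv : ∀ s : S, s⁻¹ * s * s⁻¹ = s⁻¹
  inv_unique : ∀ s t : S, s * t * s = s → t * s * t = t → t = s⁻¹

namespace InverseSemigroup

/-- The set of idempotents of a multiplicative structure. -/
def E (S : Type*) [Mul S] : Set S := {e | e * e = e}

/-- The natural partial order: `s ≤ t` iff `s = s * s⁻¹ * t`. -/
def nle {S : Type*} [Mul S] [Inv S] (s t : S) : Prop := s = s * s⁻¹ * t

/-- `r s = s * s⁻¹`. -/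
def r {S : Type*} [Mul S] [Inv S] (s : S) : S := s * s⁻¹

/-- A Clifford semigroup (semilattice of groups): idempotents are central. -/
def IsClifford (S : Type*) [Mul S] : Prop := ∀ e ∈ E S, ∀ s : S, e * s = s * e

end InverseSemigroup

open InverseSemigroup

namespace InverseSemigroup

variable {S : Type*} [InverseSemigroup S]

lemma inv_inv' (s : S) : s⁻¹⁻¹ = s :=
  (inv_unique s⁻¹ s (inv_mul_inv s) (mul_inv_mul s)).symm

lemma idem_inv {e : S} (he : e * e = e) : e⁻¹ = e :=
  (inv_unique e e (by rw [he, he]) (by rw [he, he])).symm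

lemma rr_sq (s : S) : (s * s⁻¹) * (s * s⁻¹) = s * s⁻¹ := by
  rw [← mul_assoc (s * s⁻¹) s s⁻¹, mul_inv_mul]

lemma ll_sq (s : S) : (s⁻¹ * s) * (s⁻¹ * s) = s⁻¹ * s := by
  rw [mul_assoc s⁻¹ s (s⁻¹ * s), ← mul_assoc s s⁻¹ s, mul_inv_mul]

lemma r_sq (s : S) : r s * r s = r s := rr_sq s

lemma r_mem (s : S) : r s ∈ E S := rr_sq s

lemma E_mul_mem {e f : S} (he : e * e = e) (hf : f * f = f) :
    (e * f) * (e * f) = e * f := by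
  have h1 : e * (f * ((e * f)⁻¹ * (e * f))) = e * f := by
    simpa [mul_assoc] using mul_inv_mul (e * f)
  have h2 : (e * f)⁻¹ * (e * (f * (e * f)⁻¹)) = (e * f)⁻¹ := by
    simpa [mul_assoc] using inv_mul_inv (e * f)
  have hinner : (e * f)⁻¹ * (e * (f * ((e * f)⁻¹ * e))) = (e * f)⁻¹ * e := by
    calc (e * f)⁻¹ * (e * (f * ((e * f)⁻¹ * e)))
        = ((e * f)⁻¹ * (e * (f * (e * f)⁻¹))) * e := by simp only [mul_assoc]
      _ = (e * f)⁻¹ * e := by rw [h2]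
  have a1 : (e * f) * (f * (e * f)⁻¹ * e) * (e * f) = e * f := by
    simp only [mul_assoc]
    rw [← mul_assoc e e f, he, ← mul_assoc f f ((e * f)⁻¹ * (e * f)), hf]
    exact h1
  have a2 : (f * (e * f)⁻¹ * e) * (e * f) * (f * (e * f)⁻¹ * e) = f * (e * f)⁻¹ * e := by
    simp only [mul_assoc]
    rw [← mul_assoc e e (f * (f * ((e * f)⁻¹ * e))), he,
        ← mul_assoc f f ((e * f)⁻¹ * e), hf, hinner]
  have hxe : f * (e * f)⁻¹ * e = (e * f)⁻¹ := inv_unique (e * f) _ a1 a2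
  have hxx : (e * f)⁻¹ * (e * f)⁻¹ = (e * f)⁻¹ := by
    calc (e * f)⁻¹ * (e * f)⁻¹ = (f * (e * f)⁻¹ * e) * (f * (e * f)⁻¹ * e) := by rw [hxe]
      _ = f * ((e * f)⁻¹ * (e * (f * ((e * f)⁻¹ * e)))) := by simp only [mul_assoc]
      _ = f * ((e * f)⁻¹ * e) := by rw [hinner]
      _ = (e * f)⁻¹ := by simpa [mul_assoc] using hxe
  have hef : e * f = (e * f)⁻¹ := (inv_inv' (e * f)).symm.trans (idem_inv hxx)
  calc (e * f) * (e * f) = (e * f)⁻¹ * (e * f)⁻¹ := by conv_lhs => rw [hef]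
    _ = (e * f)⁻¹ := hxx
    _ = e * f := hef.symm

lemma E_comm {e f : S} (he : e * e = e) (hf : f * f = f) : e * f = f * e := by
  have hef := E_mul_mem he hf
  have hfe := E_mul_mem hf he
  have b1 : (e * f) * (f * e) * (e * f) = e * f := by
    simp only [mul_assoc]
    rw [← mul_assoc e e f, he, ← mul_assoc f f (e * f), hf]
    simpa [mul_assoc] using hef
  have b2 : (f * e) * (e * f) * (f * e) = f * e := by
    simp only [mul_assoc]
    rw [← mul_assoc e e (f * (f * e)), he, ← mul_assoc f f e, hf]
    simpa [mul_assoc] using hfe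
  have h : f * e = (e * f)⁻¹ := inv_unique (e * f) (f * e) b1 b2
  rw [h, idem_inv hef]

lemma mul_inv_rev' (s t : S) : (s * t)⁻¹ = t⁻¹ * s⁻¹ := by
  refine (inv_unique (s * t) (t⁻¹ * s⁻¹) ?_ ?_).symm
  · calc (s * t) * (t⁻¹ * s⁻¹) * (s * t)
        = s * ((t * t⁻¹) * ((s⁻¹ * s) * t)) := by simp only [mul_assoc]
      _ = s * (((s⁻¹ * s) * (t * t⁻¹)) * t) := by
          rw [← mul_assoc (t * t⁻¹) (s⁻¹ * s) t, E_comm (rr_sq t) (ll_sq s)]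
      _ = (s * (s⁻¹ * s)) * ((t * t⁻¹) * t) := by simp only [mul_assoc]
      _ = (s * s⁻¹ * s) * (t * t⁻¹ * t) := by simp only [mul_assoc]
      _ = s * t := by rw [mul_inv_mul, mul_inv_mul]
  · calc (t⁻¹ * s⁻¹) * (s * t) * (t⁻¹ * s⁻¹)
        = t⁻¹ * ((s⁻¹ * s) * ((t * t⁻¹) * s⁻¹)) := by simp only [mul_assoc]
      _ = t⁻¹ * (((t * t⁻¹) * (s⁻¹ * s)) * s⁻¹) := by
          rw [← mul_assoc (s⁻¹ * s) (t * t⁻¹) s⁻¹, E_comm (ll_sq s) (rr_sq t)]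
      _ = (t⁻¹ * (t * t⁻¹)) * ((s⁻¹ * s) * s⁻¹) := by simp only [mul_assoc]
      _ = (t⁻¹ * t * t⁻¹) * (s⁻¹ * s * s⁻¹) := by simp only [mul_assoc]
      _ = t⁻¹ * s⁻¹ := by rw [inv_mul_inv, inv_mul_inv]

lemma conj_idem (s : S) {e : S} (he : e * e = e) :
    (s * e * s⁻¹) * (s * e * s⁻¹) = s * e * s⁻¹ := by
  calc (s * e * s⁻¹) * (s * e * s⁻¹)
      = s * ((e * (s⁻¹ * s)) * (e * s⁻¹)) := by simp only [mul_assoc]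
    _ = s * (((s⁻¹ * s) * e) * (e * s⁻¹)) := by rw [E_comm he (ll_sq s)]
    _ = s * (s⁻¹ * (s * ((e * e) * s⁻¹))) := by simp only [mul_assoc]
    _ = s * (s⁻¹ * (s * (e * s⁻¹))) := by rw [he]
    _ = (s * s⁻¹ * s) * (e * s⁻¹) := by simp only [mul_assoc]
    _ = s * e * s⁻¹ := by rw [mul_inv_mul]; simp only [mul_assoc]

lemma conj_r (x y : S) : x * r y * x⁻¹ = r (x * y) := by
  show x * (y * y⁻¹) * x⁻¹ = (x * y) * (x * y)⁻¹
  rw [mul_inv_rev']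
  simp only [mul_assoc]

lemma r_of_idem {e : S} (he : e * e = e) : r e = e := by
  show e * e⁻¹ = e; rw [idem_inv he, he]

lemma r_r (s : S) : r (s * s⁻¹) = s * s⁻¹ := r_of_idem (rr_sq s)

lemma r_mul_r (s t : S) : r (s * t) * r s = r (s * t) := by
  show (s * t) * (s * t)⁻¹ * (s * s⁻¹) = (s * t) * (s * t)⁻¹
  rw [mul_inv_rev']
  calc (s * t) * (t⁻¹ * s⁻¹) * (s * s⁻¹)
      = s * (t * (t⁻¹ * (s⁻¹ * s * s⁻¹))) := by simp only [mul_assoc]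
    _ = s * (t * (t⁻¹ * s⁻¹)) := by rw [inv_mul_inv]
    _ = (s * t) * (t⁻¹ * s⁻¹) := by simp only [mul_assoc]

lemma r_idem_mul {e : S} (he : e * e = e) (t : S) : r (e * t) = e * r t := by
  show (e * t) * (e * t)⁻¹ = e * (t * t⁻¹)
  rw [mul_inv_rev', idem_inv he]
  calc (e * t) * (t⁻¹ * e) = e * ((t * t⁻¹) * e) := by simp only [mul_assoc]
    _ = e * (e * (t * t⁻¹)) := by rw [E_comm (rr_sq t) he]
    _ = (e * e) * (t * t⁻¹) := by simp only [mul_assoc]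
    _ = e * (t * t⁻¹) := by rw [he]

lemma r_mul_idem {e : S} (he : e * e = e) (t : S) : r (t * e) = t * e * t⁻¹ := by
  show (t * e) * (t * e)⁻¹ = t * e * t⁻¹
  rw [mul_inv_rev', idem_inv he]
  calc (t * e) * (e * t⁻¹) = t * ((e * e) * t⁻¹) := by simp only [mul_assoc]
    _ = t * (e * t⁻¹) := by rw [he]
    _ = t * e * t⁻¹ := by simp only [mul_assoc]

lemma nle_refl (s : S) : nle s s := (mul_inv_mul s).symm

lemma nle_of_idem_mul {e s t : S} (he : e * e = e) (h : s = e * t) : nle s t := by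
  show s = s * s⁻¹ * t
  rw [h, mul_inv_rev', idem_inv he]
  have : (e * t) * (t⁻¹ * e) * t = e * t := by
    calc (e * t) * (t⁻¹ * e) * t = e * ((t * t⁻¹) * (e * t)) := by simp only [mul_assoc]
      _ = e * ((e * (t * t⁻¹)) * t) := by
          rw [← mul_assoc (t * t⁻¹) e t, E_comm (rr_sq t) he]
      _ = e * (e * ((t * t⁻¹) * t)) := by simp only [mul_assoc]
      _ = e * (e * t) := by rw [mul_inv_mul]
      _ = (e * e) * t := by simp only [mul_assoc]
      _ = e * t := by rw [he]
  exact this.symm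

lemma nle_idem_left {e : S} (he : e * e = e) (t : S) : nle (e * t) t :=
  nle_of_idem_mul he rfl

lemma nle_idem_right {e : S} (he : e * e = e) (t : S) : nle (t * e) t := by
  refine nle_of_idem_mul (conj_idem t he) ?_
  have : (t * e * t⁻¹) * t = t * e := by
    calc (t * e * t⁻¹) * t = t * (e * (t⁻¹ * t)) := by simp only [mul_assoc]
      _ = t * ((t⁻¹ * t) * e) := by rw [E_comm he (ll_sq t)]
      _ = (t * t⁻¹ * t) * e := by simp only [mul_assoc]
      _ = t * e := by rw [mul_inv_mul]
  exact this.symm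

lemma nle_inv {s t : S} (h : nle s t) : nle s⁻¹ t⁻¹ := by
  have key : s⁻¹ = t⁻¹ * (s * s⁻¹) := by
    conv_lhs => rw [h]
    rw [mul_inv_rev', mul_inv_rev', inv_inv']
  show s⁻¹ = s⁻¹ * s⁻¹⁻¹ * t⁻¹
  rw [inv_inv']
  suffices hgen : ∀ q : S, q * q = q → s⁻¹ = t⁻¹ * q → s = q * t → s⁻¹ * s * t⁻¹ = s⁻¹ by
    exact (hgen (s * s⁻¹) (rr_sq s) key h).symm
  intro q hqq hk hs
  calc s⁻¹ * s * t⁻¹ = (t⁻¹ * q) * ((q * t) * t⁻¹) := by rw [← hk, ← hs, mul_assoc]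
    _ = t⁻¹ * ((q * q) * (t * t⁻¹)) := by simp only [mul_assoc]
    _ = t⁻¹ * (q * (t * t⁻¹)) := by rw [hqq]
    _ = t⁻¹ * ((t * t⁻¹) * q) := by rw [E_comm hqq (rr_sq t)]
    _ = ((t⁻¹ * t) * t⁻¹) * q := by simp only [mul_assoc]
    _ = t⁻¹ * q := by rw [mul_assoc t⁻¹ t t⁻¹, ← mul_assoc t⁻¹ t t⁻¹, inv_mul_inv]
    _ = s⁻¹ := hk.symm

lemma nle_mul {s s' t t' : S} (h1 : nle s s') (h2 : nle t t') :
    nle (s * t) (s' * t') := by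
  refine nle_of_idem_mul (e := (s * s⁻¹) * (s' * (t * t⁻¹) * s'⁻¹))
    (E_mul_mem (rr_sq s) (conj_idem s' (rr_sq t))) ?_
  suffices hgen : ∀ p q : S, q * q = q → s = p * s' → t = q * t' →
      (p * (s' * q * s'⁻¹)) * (s' * t') = s * t by
    exact (hgen (s * s⁻¹) (t * t⁻¹) (rr_sq t) h1 h2).symm
  intro p q hqq hs ht
  calc (p * (s' * q * s'⁻¹)) * (s' * t')
      = p * (s' * (q * ((s'⁻¹ * s') * t'))) := by simp only [mul_assoc]
    _ = p * (s' * ((q * (s'⁻¹ * s')) * t')) := by simp only [mul_assoc]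
    _ = p * (s' * (((s'⁻¹ * s') * q) * t')) := by rw [E_comm hqq (ll_sq s')]
    _ = p * ((s' * s'⁻¹ * s') * (q * t')) := by simp only [mul_assoc]
    _ = p * (s' * (q * t')) := by rw [mul_inv_mul]
    _ = p * (s' * t) := by rw [← ht]
    _ = (p * s') * t := by simp only [mul_assoc]
    _ = s * t := by rw [← hs]


lemma rET1 {e : S} (he : e * e = e) (t : S) : r (e * t) * e = r (e * t) := by
  rw [r_idem_mul he t, mul_assoc, E_comm (r_sq t) he, ← mul_assoc, he]

lemma rET2 {e : S} (he : e * e = e) (t : S) : r (e * t) * r t = r (e * t) := by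
  rw [r_idem_mul he t, mul_assoc, r_sq]

lemma rET3 {e : S} (he : e * e = e) (t : S) : e * r (e * t) = r (e * t) := by
  rw [r_idem_mul he t, ← mul_assoc, he]


section Comm
variable {A : Type*} [InverseSemigroup A] (hc : ∀ a b : A, a * b = b * a)
include hc

lemma inv_mulC (a b : A) : (a * b)⁻¹ = a⁻¹ * b⁻¹ := by
  haveI : Std.Commutative (α := A) (· * ·) := ⟨hc⟩
  haveI : Std.Associative (α := A) (· * ·) := ⟨mul_assoc⟩
  refine (inv_unique (a * b) (a⁻¹ * b⁻¹) ?_ ?_).symm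
  · calc (a * b) * (a⁻¹ * b⁻¹) * (a * b) = (a * a⁻¹ * a) * (b * b⁻¹ * b) := by ac_rfl
      _ = a * b := by rw [mul_inv_mul, mul_inv_mul]
  · calc (a⁻¹ * b⁻¹) * (a * b) * (a⁻¹ * b⁻¹) = (a⁻¹ * a * a⁻¹) * (b⁻¹ * b * b⁻¹) := by ac_rfl
      _ = a⁻¹ * b⁻¹ := by rw [inv_mul_inv, inv_mul_inv]

lemma eps_mulC (a b : A) : (a * b) * (a * b)⁻¹ = (a * a⁻¹) * (b * b⁻¹) := by
  haveI : Std.Commutative (α := A) (· * ·) := ⟨hc⟩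
  haveI : Std.Associative (α := A) (· * ·) := ⟨mul_assoc⟩
  rw [inv_mulC hc]; ac_rfl

lemma mul_epsC (a : A) : a * (a * a⁻¹) = a := by
  rw [hc a (a * a⁻¹), mul_inv_mul]

lemma absorbC (a f : A) (h : (a * a⁻¹) * f = a * a⁻¹) : a * f = a := by
  calc a * f = (a * (a * a⁻¹)) * f := by rw [mul_epsC hc]
    _ = a * ((a * a⁻¹) * f) := by rw [mul_assoc]
    _ = a * (a * a⁻¹) := by rw [h]
    _ = a := mul_epsC hc a

omit hc in
lemma nle_eqC {a b : A} (h : nle a b) (hsupp : a * a⁻¹ = b * b⁻¹) : a = b := by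
  have h' : a = a * a⁻¹ * b := h
  rw [hsupp, mul_inv_mul] at h'
  exact h'

lemma nle_mulC {a a' b b' : A} (ha : nle a a') (hb : nle b b') : nle (a * b) (a' * b') := by
  haveI : Std.Commutative (α := A) (· * ·) := ⟨hc⟩
  haveI : Std.Associative (α := A) (· * ·) := ⟨mul_assoc⟩
  have ha' : a = a * a⁻¹ * a' := ha
  have hb' : b = b * b⁻¹ * b' := hb
  show a * b = (a * b) * (a * b)⁻¹ * (a' * b')
  calc a * b = (a * a⁻¹ * a') * (b * b⁻¹ * b') := by rw [← ha', ← hb']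
    _ = ((a * a⁻¹) * (b * b⁻¹)) * (a' * b') := by ac_rfl
    _ = (a * b) * (a * b)⁻¹ * (a' * b') := by rw [eps_mulC hc]

lemma nle_invC {a b : A} (h : nle a b) : nle a⁻¹ b⁻¹ := by
  have h' : a = a * a⁻¹ * b := h
  show a⁻¹ = a⁻¹ * a⁻¹⁻¹ * b⁻¹
  calc a⁻¹ = (a * a⁻¹ * b)⁻¹ := by rw [← h']
    _ = (a * a⁻¹)⁻¹ * b⁻¹ := by rw [inv_mulC hc]
    _ = a⁻¹ * a⁻¹⁻¹ * b⁻¹ := by rw [inv_mulC hc]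

end Comm

end InverseSemigroup

/-- If `c = δ²d` is a normalized order-preserving 3-coboundary, then
`d̃ = d · δ¹u` with `u(t) = d(t,t⁻¹)⁻¹` is a strongly normalized order-preserving
2-cochain with `δ²d̃ = c`. -/
theorem coboundary_of_strongly_normalized {T A : Type*}
    [InverseSemigroup T] [InverseSemigroup A]
    (θ : T → A) (η : T → A → A)
    (hAcomm : ∀ a b : A, a * b = b * a)
    (hθE : ∀ e ∈ E T, θ e ∈ E A)
    (hθinj : ∀ e ∈ E T, ∀ f ∈ E T, θ e = θ f → e = f)
    (hθsurj : ∀ a ∈ E A, ∃ e ∈ E T, θ e = a)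
    (hθmul : ∀ e ∈ E T, ∀ f ∈ E T, θ (e * f) = θ e * θ f)
    (hηhom : ∀ t u : T, ∀ a : A, η (t * u) a = η t (η u a))
    (hηmul : ∀ t : T, ∀ a b : A, η t (a * b) = η t a * η t b)
    (hη1 : ∀ e ∈ E T, ∀ a : A, η e a = θ e * a)
    (hη2 : ∀ t : T, ∀ e ∈ E T, η t (θ e) = θ (t * e * t⁻¹))
    (d : T → T → A)
    (hd : ∀ x y : T, d x y * (d x y)⁻¹ = θ (r (x * y)))
    (hdop : ∀ x x' y y' : T, nle x x' → nle y y' → nle (d x y) (d x' y'))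
    (c : T → T → T → A)
    (hcdef : ∀ x y z : T,
      c x y z = η x (d y z) * (d (x * y) z)⁻¹ * d x (y * z) * (d x y)⁻¹)
    (hnorm : ∀ x y : T, ∀ e ∈ E T,
      c e (e * x) y = θ (r (e * x * y)) ∧
      c (x * e) e (e * y) = θ (r (x * e * y)) ∧
      c x (y * e) e = θ (r (x * y * e))) :
    let u : T → A := fun t => (d t t⁻¹)⁻¹
    let dt : T → T → A := fun x y => d x y * (η x (u y) * (u (x * y))⁻¹ * u x)
    (∀ x y : T, dt x y * (dt x y)⁻¹ = θ (r (x * y))) ∧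
    (∀ x x' y y' : T, nle x x' → nle y y' → nle (dt x y) (dt x' y')) ∧
    (∀ t : T, ∀ e ∈ E T, dt e t = θ (r (e * t)) ∧ dt t e = θ (r (t * e))) ∧
    (∀ x y z : T,
      η x (dt y z) * (dt (x * y) z)⁻¹ * dt x (y * z) * (dt x y)⁻¹ = c x y z) := by
  intro u dt
  haveI : Std.Commutative (α := A) (· * ·) := ⟨hAcomm⟩
  haveI : Std.Associative (α := A) (· * ·) := ⟨mul_assoc⟩
  have hu : ∀ t : T, u t = (d t t⁻¹)⁻¹ := fun _ => rfl
  have hdt : ∀ x y : T, dt x y = d x y * (η x (u y) * (u (x * y))⁻¹ * u x) :=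
    fun _ _ => rfl
  have hθr : ∀ s : T, θ (r s) * θ (r s) = θ (r s) := fun s => hθE (r s) (r_mem s)
  have heta_inv : ∀ (t : T) (a : A), (η t a)⁻¹ = η t a⁻¹ := fun t a =>
    (inv_unique _ _ (by rw [← hηmul, ← hηmul, mul_inv_mul])
      (by rw [← hηmul, ← hηmul, inv_mul_inv])).symm
  have heps_eta : ∀ (t : T) (a : A), η t a * (η t a)⁻¹ = η t (a * a⁻¹) := fun t a => by
    rw [heta_inv, ← hηmul]
  have heps_u : ∀ t : T, u t * (u t)⁻¹ = θ (r t) := fun t => by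
    rw [hu, inv_inv', hAcomm, hd, show r (t * t⁻¹) = r t from r_r t]
  have hsupp_eta_u : ∀ x y : T, η x (u y) * (η x (u y))⁻¹ = θ (r (x * y)) := fun x y => by
    rw [heps_eta, heps_u, hη2 x (r y) (r_mem y),
      show x * r y * x⁻¹ = r (x * y) from conj_r x y]
  refine ⟨?_, ?_, ?_, ?_⟩
  · -- Part 1: support of dt
    intro x y
    rw [hdt]
    simp only [inv_mulC hAcomm, inv_inv']
    trans ((d x y * (d x y)⁻¹) * ((η x (u y) * (η x (u y))⁻¹) *
      ((u (x * y) * (u (x * y))⁻¹) * (u x * (u x)⁻¹))))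
    · ac_rfl
    rw [hd, hsupp_eta_u, heps_u, heps_u,
      ← hθmul _ (r_mem (x * y)) _ (r_mem x), r_mul_r, hθr, hθr]
  · -- Part 2: order preservation
    intro x x' y y' hx hy
    rw [hdt, hdt]
    have hetale : ∀ (w w' : T) (a a' : A), nle w w' → nle a a' →
        nle (η w a) (η w' a') := by
      intro w w' a a' hw ha
      have hw' : w = w * w⁻¹ * w' := hw
      have ha' : a = a * a⁻¹ * a' := ha
      show η w a = η w a * (η w a)⁻¹ * η w' a'
      rw [heps_eta]
      calc η w a = η (w * w⁻¹ * w') a := by rw [← hw']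
        _ = η (w * w⁻¹) (η w' a) := by rw [hηhom]
        _ = θ (w * w⁻¹) * η w' a := hη1 _ (rr_sq w) _
        _ = θ (w * w⁻¹) * η w' (a * a⁻¹ * a') := by rw [← ha']
        _ = θ (w * w⁻¹) * (η w' (a * a⁻¹) * η w' a') := by rw [hηmul]
        _ = (θ (w * w⁻¹) * η w' (a * a⁻¹)) * η w' a' := by rw [mul_assoc]
        _ = η (w * w⁻¹) (η w' (a * a⁻¹)) * η w' a' := by rw [← hη1 _ (rr_sq w)]
        _ = η (w * w⁻¹ * w') (a * a⁻¹) * η w' a' := by rw [← hηhom]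
        _ = η w (a * a⁻¹) * η w' a' := by rw [← hw']
    have h1 : nle (d x y) (d x' y') := hdop _ _ _ _ hx hy
    have h2 : nle (η x (u y)) (η x' (u y')) :=
      hetale _ _ _ _ hx (nle_invC hAcomm (hdop _ _ _ _ hy (nle_inv hy)))
    have h3 : nle ((u (x * y))⁻¹) ((u (x' * y'))⁻¹) :=
      nle_invC hAcomm (nle_invC hAcomm (hdop _ _ _ _ (nle_mul hx hy)
        (nle_inv (nle_mul hx hy))))
    have h4 : nle (u x) (u x') := nle_invC hAcomm (hdop _ _ _ _ hx (nle_inv hx))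
    exact nle_mulC hAcomm h1 (nle_mulC hAcomm (nle_mulC hAcomm h2 h3) h4)
  · -- Part 3: strong normalization
    intro t e he
    have hee : e * e = e := he
    have hdet : d e (e * t) = d e t :=
      nle_eqC (hdop e e (e * t) t (nle_refl e) (nle_idem_left hee t))
        (by rw [hd, hd, show r (e * (e * t)) = r (e * t) from by rw [← mul_assoc, hee]])
    have hdte2 : d (t * e) e = d t e :=
      nle_eqC (hdop (t * e) t e e (nle_idem_right hee t) (nle_refl e))
        (by rw [hd, hd, show r ((t * e) * e) = r (t * e) from by rw [mul_assoc, hee]])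
    have hK2 : ∀ s : T, nle s t → d s s⁻¹ = θ (r s) * d t t⁻¹ := by
      intro s hs
      have h' : d s s⁻¹ = d s s⁻¹ * (d s s⁻¹)⁻¹ * d t t⁻¹ :=
        hdop s t s⁻¹ t⁻¹ hs (nle_inv hs)
      rw [hd, show r (s * s⁻¹) = r s from r_r s] at h'
      exact h'
    have hc1 : c e e t = θ (r (e * t)) := by
      have h := (hnorm e t e he).1
      rw [hee] at h
      exact h
    have hc3 : c t e e = θ (r (t * e)) := by
      have h := (hnorm t e e he).2.2
      rw [mul_assoc t e e, hee] at h
      exact h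
    have habs1 : θ e * d e t = d e t := by
      rw [hAcomm]
      exact absorbC hAcomm _ _
        (by rw [hd, ← hθmul _ (r_mem (e * t)) _ he, rET1 hee t])
    have hx3 : d e t * (d e e)⁻¹ = θ (r (e * t)) := by
      have hx := hcdef e e t
      rw [hee, hdet, hη1 e he, hc1] at hx
      have hx2 : θ e * d e t * (d e t)⁻¹ * d e t * (d e e)⁻¹ = θ (r (e * t)) := hx.symm
      have hsimp : θ e * d e t * (d e t)⁻¹ * d e t * (d e e)⁻¹ = d e t * (d e e)⁻¹ := by
        calc θ e * d e t * (d e t)⁻¹ * d e t * (d e e)⁻¹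
            = (θ e * (d e t * (d e t)⁻¹ * d e t)) * (d e e)⁻¹ := by ac_rfl
          _ = (θ e * d e t) * (d e e)⁻¹ := by rw [mul_inv_mul]
          _ = d e t * (d e e)⁻¹ := by rw [habs1]
      exact hsimp.symm.trans hx2
    have hP1 : d e t = θ (r (e * t)) * d e e := by
      calc d e t = d e t * θ e := by rw [hAcomm (d e t) (θ e)]; exact habs1.symm
        _ = d e t * θ (r (e * e)) := by rw [hee, show r e = e from r_of_idem hee]
        _ = d e t * ((d e e)⁻¹ * d e e) := by rw [hAcomm ((d e e)⁻¹) (d e e), hd]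
        _ = (d e t * (d e e)⁻¹) * d e e := by rw [mul_assoc]
        _ = θ (r (e * t)) * d e e := by rw [hx3]
    have hK2et : d (e * t) (e * t)⁻¹ = θ (r (e * t)) * d t t⁻¹ :=
      hK2 (e * t) (nle_idem_left hee t)
    have hK2te : d (t * e) (t * e)⁻¹ = θ (r (t * e)) * d t t⁻¹ :=
      hK2 (t * e) (nle_idem_right hee t)
    have hsupp_etadee : η t (d e e) * (η t (d e e))⁻¹ = θ (r (t * e)) := by
      rw [heps_eta, hd, hee, show r e = e from r_of_idem hee, hη2 t e he,
        ← r_mul_idem hee t]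
    have hP2 : d t e = η t (d e e) := by
      have hx := hcdef t e e
      rw [hee, hdte2, hc3] at hx
      have hx2 : η t (d e e) * (d t e)⁻¹ = θ (r (t * e)) := by
        calc η t (d e e) * (d t e)⁻¹
            = η t (d e e) * ((d t e)⁻¹ * d t e * (d t e)⁻¹) := by rw [inv_mul_inv]
          _ = η t (d e e) * (d t e)⁻¹ * d t e * (d t e)⁻¹ := by simp only [mul_assoc]
          _ = θ (r (t * e)) := hx.symm
      have habs : d t e * θ (r (t * e)) = d t e :=
        absorbC hAcomm _ _ (by rw [hd]; exact hθr _)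
      calc d t e = θ (r (t * e)) * d t e := by
            rw [hAcomm (θ (r (t * e))) (d t e)]; exact habs.symm
        _ = (η t (d e e) * (d t e)⁻¹) * d t e := by rw [hx2]
        _ = η t (d e e) * ((d t e)⁻¹ * d t e) := by rw [mul_assoc]
        _ = η t (d e e) * (d t e * (d t e)⁻¹) := by rw [hAcomm ((d t e)⁻¹) (d t e)]
        _ = η t (d e e) * θ (r (t * e)) := by rw [hd]
        _ = η t (d e e) := absorbC hAcomm _ _ (by rw [hsupp_etadee]; exact hθr _)
    constructor
    · -- dt e t = θ (r (e * t))
      calc dt e t = d e t * (η e (u t) * (u (e * t))⁻¹ * u e) := hdt e t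
        _ = d e t * ((θ e * (d t t⁻¹)⁻¹) * (d (e * t) (e * t)⁻¹) * (d e e)⁻¹) := by
            rw [hu t, hu (e * t), hu e, inv_inv', idem_inv hee, hη1 e he]
        _ = d e t * ((θ e * (d t t⁻¹)⁻¹) * (θ (r (e * t)) * d t t⁻¹) * (d e e)⁻¹) := by
            rw [hK2et]
        _ = (d e t * (d e e)⁻¹) * (θ e * (θ (r (e * t)) * (d t t⁻¹ * (d t t⁻¹)⁻¹))) := by
            ac_rfl
        _ = θ (r (e * t)) * (θ e * (θ (r (e * t)) * θ (r (t * t⁻¹)))) := by rw [hx3, hd]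
        _ = θ (r (e * t)) := by
            rw [show r (t * t⁻¹) = r t from r_r t,
              ← hθmul _ (r_mem (e * t)) _ (r_mem t), rET2 hee t,
              ← hθmul _ he _ (r_mem (e * t)), rET3 hee t, hθr]
    · -- dt t e = θ (r (t * e))
      calc dt t e = d t e * (η t (u e) * (u (t * e))⁻¹ * u t) := hdt t e
        _ = d t e * ((η t (d e e))⁻¹ * (d (t * e) (t * e)⁻¹) * (d t t⁻¹)⁻¹) := by
            rw [hu e, hu (t * e), hu t, inv_inv', idem_inv hee, ← heta_inv]
        _ = η t (d e e) * ((η t (d e e))⁻¹ * (θ (r (t * e)) * d t t⁻¹) * (d t t⁻¹)⁻¹) := by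
            rw [hK2te, hP2]
        _ = (η t (d e e) * (η t (d e e))⁻¹) * (θ (r (t * e)) * (d t t⁻¹ * (d t t⁻¹)⁻¹)) := by
            ac_rfl
        _ = θ (r (t * e)) * (θ (r (t * e)) * θ (r (t * t⁻¹))) := by rw [hsupp_etadee, hd]
        _ = θ (r (t * e)) := by
            rw [show r (t * t⁻¹) = r t from r_r t,
              ← hθmul _ (r_mem (t * e)) _ (r_mem t), r_mul_r, hθr]
  · -- Part 4: δ²dt = c
    intro x y z
    have hsupp_c : c x y z * (c x y z)⁻¹ = θ (r ((x * y) * z)) := by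
      rw [hcdef]
      simp only [inv_mulC hAcomm, inv_inv']
      trans ((η x (d y z) * (η x (d y z))⁻¹) * ((d (x * y) z * (d (x * y) z)⁻¹) *
        ((d x (y * z) * (d x (y * z))⁻¹) * (d x y * (d x y)⁻¹))))
      · ac_rfl
      rw [heps_eta, hd, hd, hd, hd, hη2 x (r (y * z)) (r_mem (y * z)),
        show x * r (y * z) * x⁻¹ = r (x * (y * z)) from conj_r x (y * z),
        ← mul_assoc x y z,
        ← hθmul _ (r_mem ((x * y) * z)) _ (r_mem (x * y)), r_mul_r, hθr, hθr]
    rw [hdt y z, hdt (x * y) z, hdt x (y * z), hdt x y]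
    rw [hηmul, hηmul, hηmul]
    simp only [inv_mulC hAcomm, inv_inv']
    rw [← hηhom x y (u z), ← heta_inv x (u (y * z))]
    rw [← mul_assoc x y z]
    trans ((η x (d y z) * (d (x * y) z)⁻¹ * d x (y * z) * (d x y)⁻¹) *
      (((η (x * y) (u z) * (η (x * y) (u z))⁻¹) *
        ((η x (u (y * z)) * (η x (u (y * z)))⁻¹) *
         (u ((x * y) * z) * (u ((x * y) * z))⁻¹))) *
       ((η x (u y) * (η x (u y))⁻¹) * ((u (x * y) * (u (x * y))⁻¹) * (u x * (u x)⁻¹)))))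
    · ac_rfl
    rw [← hcdef x y z, hsupp_eta_u (x * y) z, hsupp_eta_u x (y * z), hsupp_eta_u x y,
      heps_u, heps_u, heps_u, ← mul_assoc x y z]
    rw [hθr, hθr, ← hθmul _ (r_mem (x * y)) _ (r_mem x), r_mul_r, hθr,
      ← hθmul _ (r_mem ((x * y) * z)) _ (r_mem (x * y)), r_mul_r]
    exact absorbC hAcomm _ _ (by rw [hsupp_c]; exact hθr _)
end

section
/- Let T be an inverse semigroup, A a T-module with structure (θ, η), and K = {(e, w) ∈ E(T) × FG(T) | e ≤ ν(w)}. Let N = {(a, e, w) ∈ A × E(T) × FG(T) | a ∈ A_{θ(e)} and e ≤ ν(w)} with coordinatewise multiplication, and define i(a) = (a, θ⁻¹(a a⁻¹), ε), α(e, ε) = (θ(e), e, ε), β(a, e, w) = (e, w). Then: (1) i is an injective homomorphism A → N with i(A) = β⁻¹(E(S)); (2) α is an isomorphism E(S) → E(N); (3) β is an idempotent-separating homomorphism N → S with β(N) = π⁻¹(E(T)) and β|_{E(N)} = α⁻¹, where S = {(t,w) | t ≤ ν(w)} and π(t,w) = t. -/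
open InverseSemigroup

/-- Evaluate a word over the alphabet `T ⊔ T⁻¹` (encoded as `List (T × Bool)`,
with `(x, true) = [x]` and `(x, false) = [x]⁻¹`) in `T¹ = WithOne T`;
the empty word evaluates to `1`. -/
def evalWord {T : Type*} [InverseSemigroup T] (l : List (T × Bool)) : WithOne T :=
  l.foldr (fun p acc => (↑(if p.2 then p.1 else p.1⁻¹) : WithOne T) * acc) 1

/-- The map `ν : FG(T) → T¹` evaluating the reduced word of an element of the free
group on `T`; `ν(ε) = 1`. -/
def nu {T : Type*} [InverseSemigroup T] [DecidableEq T] (w : FreeGroup T) : WithOne T :=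
  evalWord (FreeGroup.toWord w)

/-- Membership in the `E`-unitary cover `S = {(t,w) ∈ T × FG(T) | t ≤ ν(w)}`. -/
def Pcov {T : Type*} [InverseSemigroup T] [DecidableEq T] (p : T × FreeGroup T) : Prop :=
  nle (p.1 : WithOne T) (nu p.2)

/-- Membership in `N = {(a,e,w) | a ∈ A_{θ(e)}, e ∈ E(T), e ≤ ν(w)}`. -/
def QN {T A : Type*} [InverseSemigroup T] [InverseSemigroup A] [DecidableEq T]
    (θ : T → A) (n : A × T × FreeGroup T) : Prop :=
  n.2.1 ∈ E T ∧ n.1 * n.1⁻¹ = θ n.2.1 ∧ nle (n.2.1 : WithOne T) (nu n.2.2)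


section AuxLemmas

variable {S : Type*} [InverseSemigroup S]

lemma aux_inv_inv (s : S) : s⁻¹⁻¹ = s :=
  (InverseSemigroup.inv_unique s⁻¹ s (InverseSemigroup.inv_mul_inv s)
    (InverseSemigroup.mul_inv_mul s)).symm

lemma aux_idem_inv {e : S} (he : e * e = e) : e⁻¹ = e :=
  (InverseSemigroup.inv_unique e e (by rw [he, he]) (by rw [he, he])).symm

lemma aux_r_idem (s : S) : (s * s⁻¹) * (s * s⁻¹) = s * s⁻¹ := by
  have h := InverseSemigroup.mul_inv_mul s
  calc (s * s⁻¹) * (s * s⁻¹) = (s * s⁻¹ * s) * s⁻¹ := by simp only [mul_assoc]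
    _ = s * s⁻¹ := by rw [h]

lemma aux_idem_mul {e f : S} (he : e * e = e) (hf : f * f = f) :
    (e * f) * (e * f) = e * f := by
  set a := (e * f)⁻¹ with ha
  have he' : ∀ x : S, e * (e * x) = e * x := fun x => by rw [← mul_assoc, he]
  have hf' : ∀ x : S, f * (f * x) = f * x := fun x => by rw [← mul_assoc, hf]
  have h1 := InverseSemigroup.mul_inv_mul (e * f)
  have h2 := InverseSemigroup.inv_mul_inv (e * f)
  rw [← ha] at h1 h2
  simp only [mul_assoc] at h1 h2
  have h2' : ∀ x : S, a * (e * (f * (a * x))) = a * x := fun x => by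
    have hx : a * (e * (f * (a * x))) = (a * (e * (f * a))) * x := by
      simp only [mul_assoc]
    rw [hx, h2]
  have h3 : (e * f) * (f * a * e) * (e * f) = e * f := by
    simp only [mul_assoc, he', hf']; exact h1
  have h4 : (f * a * e) * (e * f) * (f * a * e) = f * a * e := by
    simp only [mul_assoc, he', hf', h2']
  have h5 : f * a * e = a := InverseSemigroup.inv_unique (e * f) (f * a * e) h3 h4
  have h6 : a * a = a := by
    rw [← h5]; simp only [mul_assoc, h2']
  have h7 : e * f = a := by
    have hii := aux_inv_inv (e * f)
    rw [← ha] at hii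
    rw [← hii, aux_idem_inv h6]
  rw [h7, h6]

end AuxLemmas

/-- The maps `i(a) = (a, θ⁻¹(a a⁻¹), ε)`, `α(e,ε) = (θ(e), e, ε)` and
`β(a,e,w) = (e,w)` have the properties of the first maps of the crossed module
extension constructed from the `E`-unitary cover. -/
theorem cover_crossed_module_maps {T A : Type*}
    [InverseSemigroup T] [InverseSemigroup A] [DecidableEq T]
    (θ : T → A) (η : T → A → A)
    (hAcomm : ∀ a b : A, a * b = b * a)
    (hθE : ∀ e ∈ E T, θ e ∈ E A)
    (hθinj : ∀ e ∈ E T, ∀ f ∈ E T, θ e = θ f → e = f)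
    (hθsurj : ∀ a ∈ E A, ∃ e ∈ E T, θ e = a)
    (hθmul : ∀ e ∈ E T, ∀ f ∈ E T, θ (e * f) = θ e * θ f)
    (hηhom : ∀ t u : T, ∀ a : A, η (t * u) a = η t (η u a))
    (hηmul : ∀ t : T, ∀ a b : A, η t (a * b) = η t a * η t b)
    (hη1 : ∀ e ∈ E T, ∀ a : A, η e a = θ e * a)
    (hη2 : ∀ t : T, ∀ e ∈ E T, η t (θ e) = θ (t * e * t⁻¹))
    (θinv : A → T)
    (hθinv1 : ∀ e ∈ E T, θinv (θ e) = e)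
    (hθinv2 : ∀ a ∈ E A, θ (θinv a) = a ∧ θinv a ∈ E T) :
    let i : A → A × T × FreeGroup T := fun a => (a, θinv (a * a⁻¹), (1 : FreeGroup T))
    let alpha : T → A × T × FreeGroup T := fun e => (θ e, e, (1 : FreeGroup T))
    let beta : A × T × FreeGroup T → T × FreeGroup T := fun n => (n.2.1, n.2.2)
    -- (1) i is an injective homomorphism A → N with image β⁻¹(E(S))
    (∀ a : A, QN θ (i a)) ∧
    Function.Injective i ∧
    (∀ a b : A, i (a * b) = i a * i b) ∧
    (∀ n : A × T × FreeGroup T, QN θ n →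
      (beta n * beta n = beta n ↔ ∃ a : A, i a = n)) ∧
    -- (2) α is an isomorphism from E(S) = E(T) × {ε} onto E(N)
    (∀ e ∈ E T, QN θ (alpha e) ∧ alpha e * alpha e = alpha e) ∧
    (∀ e ∈ E T, ∀ f ∈ E T, alpha e = alpha f → e = f) ∧
    (∀ e ∈ E T, ∀ f ∈ E T, alpha (e * f) = alpha e * alpha f) ∧
    (∀ n : A × T × FreeGroup T, QN θ n → n * n = n → ∃ e ∈ E T, alpha e = n) ∧
    -- (3) β is an idempotent-separating homomorphism with β(N) = π⁻¹(E(T))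
    (∀ m n : A × T × FreeGroup T, beta (m * n) = beta m * beta n) ∧
    (∀ m n : A × T × FreeGroup T, QN θ m → QN θ n → m * m = m → n * n = n →
      beta m = beta n → m = n) ∧
    (∀ p : T × FreeGroup T, Pcov p →
      (p.1 ∈ E T ↔ ∃ n : A × T × FreeGroup T, QN θ n ∧ beta n = p)) ∧
    -- β restricted to E(N) is the inverse of α
    (∀ n : A × T × FreeGroup T, QN θ n → n * n = n → alpha n.2.1 = n) := by
  intro i alpha beta
  haveI : Std.Associative (α := A) (· * ·) := ⟨mul_assoc⟩
  haveI : Std.Commutative (α := A) (· * ·) := ⟨hAcomm⟩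
  have hinvmul : ∀ a b : A, (a * b)⁻¹ = a⁻¹ * b⁻¹ := by
    intro a b
    refine (InverseSemigroup.inv_unique (a * b) (a⁻¹ * b⁻¹) ?_ ?_).symm
    · have h : a * b * (a⁻¹ * b⁻¹) * (a * b) = (a * a⁻¹ * a) * (b * b⁻¹ * b) := by ac_rfl
      rw [h, InverseSemigroup.mul_inv_mul, InverseSemigroup.mul_inv_mul]
    · have h : a⁻¹ * b⁻¹ * (a * b) * (a⁻¹ * b⁻¹) = (a⁻¹ * a * a⁻¹) * (b⁻¹ * b * b⁻¹) := by ac_rfl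
      rw [h, InverseSemigroup.inv_mul_inv, InverseSemigroup.inv_mul_inv]
  have hrr : ∀ a b : A, (a * b) * (a * b)⁻¹ = (a * a⁻¹) * (b * b⁻¹) := fun a b => by
    rw [hinvmul]; ac_rfl
  have hnu1 : nu (1 : FreeGroup T) = 1 := by
    simp [nu, FreeGroup.toWord_one, evalWord]
  have hnle1 : ∀ e : T, e * e = e → nle (e : WithOne T) (nu (1 : FreeGroup T)) := by
    intro e he
    rw [hnu1]
    show (e : WithOne T) = ↑e * (↑e)⁻¹ * 1
    rw [mul_one, ← WithOne.coe_inv, aux_idem_inv he, ← WithOne.coe_mul, he]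
  -- key : β restricted to E(N) is inverse of α
  have key : ∀ n : A × T × FreeGroup T, QN θ n → n * n = n → alpha n.2.1 = n := by
    intro n hn hidem
    have h1 : n.1 * n.1 = n.1 := congrArg Prod.fst hidem
    have h3 : n.2.2 * n.2.2 = n.2.2 := congrArg (fun x => x.2.2) hidem
    have hw : n.2.2 = 1 := mul_left_cancel (by rw [h3, mul_one])
    have hθn : θ n.2.1 = n.1 := by rw [← hn.2.1, aux_idem_inv h1, h1]
    show (θ n.2.1, n.2.1, (1 : FreeGroup T)) = n
    rw [hθn, ← hw]
  refine ⟨?_, ?_, ?_, ?_, ?_, ?_, ?_, ?_, ?_, ?_, ?_, ?_⟩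
  · -- (1a) i maps into N
    intro a
    have h := hθinv2 (a * a⁻¹) (aux_r_idem a)
    exact ⟨h.2, h.1.symm, hnle1 _ h.2⟩
  · -- (1b) injective
    intro a b h
    exact congrArg Prod.fst h
  · -- (1c) homomorphism
    intro a b
    have hea := hθinv2 (a * a⁻¹) (aux_r_idem a)
    have heb := hθinv2 (b * b⁻¹) (aux_r_idem b)
    have hmul : (a, θinv (a * a⁻¹), (1 : FreeGroup T)) * (b, θinv (b * b⁻¹), 1)
        = (a * b, θinv (a * a⁻¹) * θinv (b * b⁻¹), 1) := by
      show (a * b, θinv (a * a⁻¹) * θinv (b * b⁻¹), (1 : FreeGroup T) * 1) = _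
      rw [mul_one]
    show (a * b, θinv ((a * b) * (a * b)⁻¹), (1 : FreeGroup T)) = _
    rw [hmul]
    refine congrArg (fun x => ((a * b : A), x, (1 : FreeGroup T))) ?_
    rw [hrr]
    conv_lhs => rw [← hea.1, ← heb.1]
    rw [← hθmul _ hea.2 _ heb.2, hθinv1 _ (aux_idem_mul hea.2 heb.2)]
  · -- (1d) image of i is β⁻¹(E(S))
    intro n hn
    constructor
    · intro h
      have h2 : n.2.2 * n.2.2 = n.2.2 := congrArg Prod.snd h
      have hw : n.2.2 = 1 := mul_left_cancel (by rw [h2, mul_one])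
      refine ⟨n.1, ?_⟩
      show (n.1, θinv (n.1 * n.1⁻¹), (1 : FreeGroup T)) = n
      rw [hn.2.1, hθinv1 _ hn.1, ← hw]
    · rintro ⟨a, rfl⟩
      have he : θinv (a * a⁻¹) * θinv (a * a⁻¹) = θinv (a * a⁻¹) :=
        (hθinv2 (a * a⁻¹) (aux_r_idem a)).2
      show (θinv (a * a⁻¹) * θinv (a * a⁻¹), (1 : FreeGroup T) * 1)
          = (θinv (a * a⁻¹), (1 : FreeGroup T))
      rw [he, mul_one]
  · -- (2a) α maps into E(N)
    intro e he
    have he' : e * e = e := he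
    have hA : θ e * θ e = θ e := hθE e he
    refine ⟨⟨he, ?_, hnle1 e he'⟩, ?_⟩
    · show θ e * (θ e)⁻¹ = θ e
      rw [aux_idem_inv hA, hA]
    · show (θ e * θ e, e * e, (1 : FreeGroup T) * 1) = (θ e, e, (1 : FreeGroup T))
      rw [hA, he', mul_one]
  · -- (2b) α injective
    intro e _ f _ h
    exact congrArg (fun x => x.2.1) h
  · -- (2c) α homomorphism
    intro e he f hf
    show (θ (e * f), e * f, (1 : FreeGroup T))
        = (θ e * θ f, e * f, (1 : FreeGroup T) * 1)
    rw [hθmul e he f hf, mul_one]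
  · -- (2d) α surjective onto E(N)
    intro n hn hidem
    exact ⟨n.2.1, hn.1, key n hn hidem⟩
  · -- (3a) β homomorphism
    intro m n
    rfl
  · -- (3b) β idempotent separating
    intro m n hm hn hmi hni hb
    have h21 : m.2.1 = n.2.1 := congrArg Prod.fst hb
    have h22 : m.2.2 = n.2.2 := congrArg Prod.snd hb
    have e1 := key m hm hmi
    have e2 := key n hn hni
    rw [← e1, ← e2, h21]
  · -- (3c) image of β
    intro p hp
    constructor
    · intro hpe
      have hpe' : p.1 * p.1 = p.1 := hpe
      have hA : θ p.1 * θ p.1 = θ p.1 := hθE p.1 hpe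
      refine ⟨(θ p.1, p.1, p.2), ⟨hpe, ?_, hp⟩, rfl⟩
      show θ p.1 * (θ p.1)⁻¹ = θ p.1
      rw [aux_idem_inv hA, hA]
    · rintro ⟨n, hn, rfl⟩
      exact hn.1
  · -- (3d) β on E(N) is inverse of α
    exact key
end
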